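/- arXiv:1704.02100 — 2 statements merged into one kernel-verified Lean document; each statement's English description precedes it below -/
import Mathlib

section
/- Let X be a random variable distributed according to an offspring law with pgf f satisfying p_0 > 0 and μ_f ≤ 1, and let Y be the total progeny of the corresponding Galton–Watson process with unit initial population. Define the Cramér rate functions I_f(x) = sup_{α ∈ ℝ} {αx − log f(e^α)} and I_G(y) = sup_{β ∈ ℝ} {βy − log G(e^β)}, where G is the pgf of Y. Then for all y ≥ 1, I_G(y) = y · I_f((y−1)/y). -/
open scoped ENNReal
open Real

/-- The probability generating function of a distribution `p` on ℕ, evaluated in `ℝ≥0∞`. -/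
noncomputable def pgf (p : ℕ → ℝ≥0∞) (x : ℝ≥0∞) : ℝ≥0∞ := ∑' h : ℕ, x ^ h * p h

/-- The Cramér rate function of the law `p` on ℕ:
`I_p(x) = sup_{α ∈ ℝ} {α x - log (∑_h e^{α h} p_h)}`, with values in `[0, ∞]` inside `EReal`. -/
noncomputable def cramerRate (p : ℕ → ℝ≥0∞) (x : ℝ) : EReal :=
  ⨆ α : ℝ, (((α * x : ℝ) : EReal) - ENNReal.log (pgf p (ENNReal.ofReal (Real.exp α))))

namespace GWaux

/-- convolution powers of `q` -/
noncomputable def cpow (q : ℕ → ℝ≥0∞) : ℕ → ℕ → ℝ≥0∞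
  | 0, m => if m = 0 then 1 else 0
  | h + 1, m => ∑' ij : ℕ × ℕ, if ij.1 + ij.2 = m then q ij.1 * cpow q h ij.2 else 0

lemma collapse (k : ℕ) (X : ℝ≥0∞) : ∑' m : ℕ, (if k = m then X else 0) = X := by
  simpa [eq_comm] using tsum_ite_eq k X

lemma pointwise (q : ℕ → ℝ≥0∞) (s : ℝ≥0∞) (h m : ℕ) :
    s ^ m * cpow q (h+1) m
      = ∑' ij : ℕ × ℕ, if ij.1 + ij.2 = m then (s ^ ij.1 * q ij.1) * (s ^ ij.2 * cpow q h ij.2) else 0 := by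
  rw [cpow, ← ENNReal.tsum_mul_left]
  refine tsum_congr fun ij => ?_
  split_ifs with hij
  · rw [← hij, pow_add]; ring
  · simp

lemma tsum_ite_lt (f : ℕ → ℝ≥0∞) (n : ℕ) :
    ∑' m : ℕ, (if m < n then f m else 0) = ∑ m ∈ Finset.range n, f m := by
  rw [tsum_eq_sum (s := Finset.range n) (f := fun m => if m < n then f m else 0)
    (fun b hb => by simp only [Finset.mem_range] at hb; simp [hb])]
  exact Finset.sum_congr rfl fun m hm => by simp [Finset.mem_range.mp hm]

lemma tsum_cpow (q : ℕ → ℝ≥0∞) (s : ℝ≥0∞) : ∀ h : ℕ,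
    ∑' m : ℕ, s ^ m * cpow q h m = (pgf q s) ^ h
  | 0 => by
    rw [pow_zero]
    rw [show (1:ℝ≥0∞) = if (0:ℕ) = 0 then (1:ℝ≥0∞) else 0 by simp]
    refine tsum_eq_single 0 ?_ |>.trans (by simp [cpow])
    intro m hm; simp [cpow, hm]
  | h + 1 => by
    have key := pointwise q s h
    calc ∑' m : ℕ, s ^ m * cpow q (h+1) m
        = ∑' (m : ℕ) (ij : ℕ × ℕ), if ij.1 + ij.2 = m then (s ^ ij.1 * q ij.1) * (s ^ ij.2 * cpow q h ij.2) else 0 := tsum_congr key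
      _ = ∑' (ij : ℕ × ℕ), (s ^ ij.1 * q ij.1) * (s ^ ij.2 * cpow q h ij.2) := by
          rw [ENNReal.tsum_comm]
          exact tsum_congr fun ij => collapse _ _
      _ = (pgf q s) * (pgf q s) ^ h := by
          rw [ENNReal.tsum_prod']
          simp_rw [ENNReal.tsum_mul_left, ENNReal.tsum_mul_right]
          rw [← ENNReal.tsum_mul_right, tsum_cpow q s h, ENNReal.tsum_mul_right]
          rfl
      _ = (pgf q s) ^ (h + 1) := (pow_succ' _ _).symm

lemma sum_cpow_le (q : ℕ → ℝ≥0∞) (s : ℝ≥0∞) : ∀ (h n : ℕ),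
    ∑ m ∈ Finset.range n, s ^ m * cpow q h m ≤ (∑ k ∈ Finset.range n, s ^ k * q k) ^ h
  | 0, n => by
    simp only [cpow, pow_zero]
    calc ∑ m ∈ Finset.range n, s ^ m * (if m = 0 then (1:ℝ≥0∞) else 0)
        ≤ ∑ m ∈ Finset.range n, (if m = 0 then (1:ℝ≥0∞) else 0) :=
          Finset.sum_le_sum fun m _ => by split_ifs with h <;> simp [h]
      _ ≤ 1 := by
          rw [Finset.sum_ite_eq' (Finset.range n) 0 (fun _ => (1:ℝ≥0∞))]
          split_ifs <;> simp
  | h + 1, n => by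
    calc ∑ m ∈ Finset.range n, s ^ m * cpow q (h+1) m
        = ∑' m : ℕ, if m < n then s ^ m * cpow q (h+1) m else 0 := (tsum_ite_lt _ n).symm
      _ = ∑' (m : ℕ) (ij : ℕ × ℕ), if ij.1 + ij.2 = m then
            (if m < n then (s ^ ij.1 * q ij.1) * (s ^ ij.2 * cpow q h ij.2) else 0) else 0 := by
          refine tsum_congr fun m => ?_
          by_cases hm : m < n
          · simp only [hm, if_true, pointwise q s h m]
          · simp [hm]
      _ = ∑' (ij : ℕ × ℕ), if ij.1 + ij.2 < n then
            (s ^ ij.1 * q ij.1) * (s ^ ij.2 * cpow q h ij.2) else 0 := by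
          rw [ENNReal.tsum_comm]
          refine tsum_congr fun ij => ?_
          have : ∀ m : ℕ, (if ij.1 + ij.2 = m then
              (if m < n then (s ^ ij.1 * q ij.1) * (s ^ ij.2 * cpow q h ij.2) else 0) else 0)
              = (if ij.1 + ij.2 = m then
              (if ij.1 + ij.2 < n then (s ^ ij.1 * q ij.1) * (s ^ ij.2 * cpow q h ij.2) else 0) else 0) := by
            intro m; by_cases h1 : ij.1 + ij.2 = m
            · subst h1; rfl
            · simp [h1]
          rw [tsum_congr this, collapse]
      _ ≤ ∑' (ij : ℕ × ℕ), (if ij.1 < n then s ^ ij.1 * q ij.1 else 0)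
            * (if ij.2 < n then s ^ ij.2 * cpow q h ij.2 else 0) := by
          refine Summable.tsum_le_tsum (fun ij => ?_) ENNReal.summable ENNReal.summable
          split_ifs with h1 h2 h3 <;> first
            | exact le_rfl
            | (exact zero_le)
            | (exfalso; omega)
      _ = (∑ k ∈ Finset.range n, s ^ k * q k) * ∑ m ∈ Finset.range n, s ^ m * cpow q h m := by
          rw [ENNReal.tsum_prod']
          simp_rw [ENNReal.tsum_mul_left]
          rw [ENNReal.tsum_mul_right, tsum_ite_lt, tsum_ite_lt]
      _ ≤ (∑ k ∈ Finset.range n, s ^ k * q k) * (∑ k ∈ Finset.range n, s ^ k * q k) ^ h :=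
          mul_le_mul_right (sum_cpow_le q s h n) _
      _ = (∑ k ∈ Finset.range n, s ^ k * q k) ^ (h + 1) := (pow_succ' _ _).symm

lemma pgf_le_of_fixed (p q : ℕ → ℝ≥0∞) (hq0 : q 0 = 0)
    (hrec : ∀ k, q (k+1) = ∑' h : ℕ, p h * cpow q h k)
    (s u : ℝ≥0∞) (hu : s * pgf p u ≤ u) : pgf q s ≤ u := by
  rw [pgf, ENNReal.tsum_eq_iSup_nat]
  refine iSup_le fun n => ?_
  induction n with
  | zero => simp
  | succ n ih =>
    rw [Finset.sum_range_succ']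
    simp only [hq0, pow_zero, mul_zero, one_mul, add_zero]
    calc ∑ k ∈ Finset.range n, s ^ (k+1) * q (k+1)
        = s * ∑ k ∈ Finset.range n, ∑' h : ℕ, s ^ k * (p h * cpow q h k) := by
          rw [Finset.mul_sum]
          refine Finset.sum_congr rfl fun k _ => ?_
          rw [hrec, pow_succ', mul_assoc, ← ENNReal.tsum_mul_left]
      _ = s * ∑' h : ℕ, ∑ k ∈ Finset.range n, s ^ k * (p h * cpow q h k) := by
          rw [Summable.tsum_finsetSum fun i _ => ENNReal.summable]
      _ = s * ∑' h : ℕ, p h * ∑ k ∈ Finset.range n, s ^ k * cpow q h k := by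
          congr 1; refine tsum_congr fun h => ?_
          rw [Finset.mul_sum]; exact Finset.sum_congr rfl fun k _ => by ring
      _ ≤ s * ∑' h : ℕ, p h * u ^ h := by
          gcongr with h
          exact le_trans (sum_cpow_le q s h n) (pow_le_pow_left' ih h)
      _ = s * pgf p u := by
          rw [pgf]; congr 1; exact tsum_congr fun h => mul_comm _ _
      _ ≤ u := hu

lemma coeff_unique (a b : ℕ → ℝ≥0∞) (ha : ∀ k, a k ≤ 1) (hb : ∀ k, b k ≤ 1)
    (heq : ∀ s : ℝ≥0∞, 0 < s → s < 1 → ∑' k : ℕ, s ^ k * a k = ∑' k : ℕ, s ^ k * b k) :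
    ∀ n, a n = b n := by
  have split : ∀ (c : ℕ → ℝ≥0∞) (n : ℕ) (s : ℝ≥0∞),
      ∑' k : ℕ, s ^ k * c (k + n) = c n + s * ∑' k : ℕ, s ^ k * c (k + n + 1) := by
    intro c n s
    rw [tsum_eq_zero_add' ENNReal.summable]
    congr 1
    · simp
    · rw [← ENNReal.tsum_mul_left]
      refine tsum_congr fun k => ?_
      rw [show k + 1 + n = k + n + 1 from by omega, pow_succ', mul_assoc]
  have upper : ∀ (c : ℕ → ℝ≥0∞), (∀ k, c k ≤ 1) → ∀ (n : ℕ) (s : ℝ≥0∞), s < 1 →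
      ∑' k : ℕ, s ^ k * c (k + n) ≤ c n + s * (1 - s)⁻¹ := by
    intro c hc n s hs
    rw [split c n s, ← ENNReal.tsum_geometric s]
    gcongr with k
    calc s ^ k * c (k + n + 1) ≤ s ^ k * 1 := by gcongr; exact hc _
      _ = s ^ k := mul_one _
  have lower : ∀ (c : ℕ → ℝ≥0∞) (n : ℕ) (s : ℝ≥0∞),
      c n ≤ ∑' k : ℕ, s ^ k * c (k + n) := by
    intro c n s
    have := ENNReal.le_tsum (f := fun k : ℕ => s ^ k * c (k + n)) 0
    simpa using this
  have head : ∀ n : ℕ, (∀ s : ℝ≥0∞, 0 < s → s < 1 →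
      ∑' k : ℕ, s ^ k * a (k + n) = ∑' k : ℕ, s ^ k * b (k + n)) → a n = b n := by
    intro n hn
    have key : ∀ (c d : ℕ → ℝ≥0∞), (∀ k, d k ≤ 1) →
        (∀ s : ℝ≥0∞, 0 < s → s < 1 →
          ∑' k : ℕ, s ^ k * c (k + n) = ∑' k : ℕ, s ^ k * d (k + n)) →
        c n ≤ d n := by
      intro c d hd hcd
      refine ENNReal.le_of_forall_pos_le_add fun ε hε _ => ?_
      set s : ℝ≥0∞ := min 2⁻¹ ((ε : ℝ≥0∞) / 2) with hsdef
      have hs0 : 0 < s := lt_min (by norm_num)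
        (ENNReal.div_pos (by exact_mod_cast hε.ne') (by norm_num))
      have hs1 : s < 1 := lt_of_le_of_lt (min_le_left _ _) (by norm_num)
      calc c n ≤ ∑' k : ℕ, s ^ k * c (k + n) := lower c n s
        _ = ∑' k : ℕ, s ^ k * d (k + n) := hcd s hs0 hs1
        _ ≤ d n + s * (1 - s)⁻¹ := upper d hd n s hs1
        _ ≤ d n + (ε : ℝ≥0∞) := by
            gcongr
            calc s * (1 - s)⁻¹ ≤ ((ε : ℝ≥0∞) / 2) * 2 := by
                  refine mul_le_mul' (min_le_right _ _) ?_
                  have h2 : (2:ℝ≥0∞)⁻¹ ≤ 1 - s :=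
                    ENNReal.one_sub_inv_two ▸ tsub_le_tsub_left (min_le_left _ _) 1
                  calc (1 - s)⁻¹ ≤ ((2:ℝ≥0∞)⁻¹)⁻¹ := ENNReal.inv_le_inv.2 h2
                    _ = 2 := inv_inv _
              _ = (ε : ℝ≥0∞) := ENNReal.div_mul_cancel (by norm_num) (by norm_num)
    exact le_antisymm (key a b hb hn) (key b a ha fun s h1 h2 => (hn s h1 h2).symm)
  have main : ∀ n : ℕ, ∀ s : ℝ≥0∞, 0 < s → s < 1 →
      ∑' k : ℕ, s ^ k * a (k + n) = ∑' k : ℕ, s ^ k * b (k + n) := by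
    intro n
    induction n with
    | zero => exact heq
    | succ n ih =>
      intro s hs0 hs1
      have h1 := ih s hs0 hs1
      rw [split a n s, split b n s, head n ih] at h1
      have hfin : b n ≠ ∞ := (lt_of_le_of_lt (hb n) ENNReal.one_lt_top).ne
      exact (ENNReal.mul_right_inj hs0.ne' (hs1.trans ENNReal.one_lt_top).ne).mp
        ((ENNReal.add_right_inj hfin).mp h1)
  exact fun n => head n (main n)
lemma tsum_shift (p q : ℕ → ℝ≥0∞) (s : ℝ≥0∞) (d : ℕ → ℝ≥0∞) (hd0 : d 0 = 0)
    (hdrec : ∀ k, d (k+1) = ∑' h : ℕ, p h * cpow q h k) :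
    ∑' k : ℕ, s ^ k * d k = s * pgf p (pgf q s) := by
  rw [tsum_eq_zero_add' ENNReal.summable]
  simp only [pow_zero, one_mul, hd0, zero_add]
  calc ∑' k : ℕ, s ^ (k+1) * d (k+1)
      = ∑' k : ℕ, ∑' h : ℕ, s * (p h * (s ^ k * cpow q h k)) := by
        refine tsum_congr fun k => ?_
        rw [hdrec, ← ENNReal.tsum_mul_left]
        exact tsum_congr fun h => by rw [pow_succ']; ring
    _ = ∑' h : ℕ, s * (p h * (pgf q s) ^ h) := by
        rw [ENNReal.tsum_comm]
        exact tsum_congr fun h => by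
          rw [ENNReal.tsum_mul_left, ENNReal.tsum_mul_left, tsum_cpow]
    _ = s * pgf p (pgf q s) := by
        rw [ENNReal.tsum_mul_left, pgf]
        congr 1
        exact tsum_congr fun h => mul_comm _ _

lemma qrec (p q : ℕ → ℝ≥0∞) (hp : ∑' h : ℕ, p h = 1) (hq : ∑' k : ℕ, q k = 1)
    (hfe : ∀ s : ℝ≥0∞, s ≤ 1 → pgf q s = s * pgf p (pgf q s)) :
    q 0 = 0 ∧ ∀ k, q (k+1) = ∑' h : ℕ, p h * cpow q h k := by
  classical
  set d : ℕ → ℝ≥0∞ := fun k => Nat.casesOn k 0 (fun k' => ∑' h : ℕ, p h * cpow q h k') with hd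
  have hd0 : d 0 = 0 := rfl
  have hdrec : ∀ k, d (k+1) = ∑' h : ℕ, p h * cpow q h k := fun k => rfl
  have hq1 : pgf q 1 = 1 := by rw [pgf]; simpa using hq
  have hp1 : pgf p 1 = 1 := by rw [pgf]; simpa using hp
  have hdsum : ∑' k : ℕ, d k = 1 := by
    have := tsum_shift p q 1 d hd0 hdrec
    simpa [hq1, hp1] using this
  have hqle : ∀ k, q k ≤ 1 := fun k => hq ▸ ENNReal.le_tsum k
  have hdle : ∀ k, d k ≤ 1 := fun k => hdsum ▸ ENNReal.le_tsum k
  have huniq := coeff_unique q d hqle hdle ?_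
  · exact ⟨huniq 0, fun k => huniq (k+1)⟩
  · intro s hs0 hs1
    rw [tsum_shift p q s d hd0 hdrec]
    exact hfe s hs1.le

lemma fe_all (p q : ℕ → ℝ≥0∞) (hq0 : q 0 = 0)
    (hrec : ∀ k, q (k+1) = ∑' h : ℕ, p h * cpow q h k) (s : ℝ≥0∞) :
    pgf q s = s * pgf p (pgf q s) :=
  tsum_shift p q s q hq0 hrec

lemma coe_mul_iSup {ι : Type*} [Nonempty ι] (c : ℝ) (hc : 0 < c) (f : ι → EReal) :
    (c : EReal) * ⨆ i, f i = ⨆ i, (c : EReal) * f i := by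
  have hc0 : (0:EReal) ≤ (c:EReal) := by exact_mod_cast hc.le
  have hinv0 : (0:EReal) ≤ ((c⁻¹ : ℝ) : EReal) := by exact_mod_cast inv_nonneg.mpr hc.le
  refine le_antisymm ?_ (iSup_le fun i => mul_le_mul_of_nonneg_left (le_iSup f i) hc0)
  have h1 : ∀ i, f i ≤ ((c⁻¹:ℝ) : EReal) * ⨆ j, (c:EReal) * f j := by
    intro i
    calc f i = ((c⁻¹:ℝ) : EReal) * ((c:EReal) * f i) := by
          rw [← mul_assoc, ← EReal.coe_mul, inv_mul_cancel₀ hc.ne', EReal.coe_one, one_mul]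
      _ ≤ _ := mul_le_mul_of_nonneg_left (le_iSup (fun j => (c:EReal) * f j) i) hinv0
  calc (c:EReal) * ⨆ i, f i
      ≤ (c:EReal) * (((c⁻¹:ℝ):EReal) * ⨆ i, (c:EReal) * f i) :=
        mul_le_mul_of_nonneg_left (iSup_le h1) hc0
    _ = ⨆ i, (c:EReal) * f i := by
        rw [← mul_assoc, ← EReal.coe_mul, mul_inv_cancel₀ hc.ne', EReal.coe_one, one_mul]

end GWaux

/-- Rate function identity (Proposition 3.1): if `p` is an offspring pmf with `p 0 > 0` and
mean `≤ 1`, and `q` is the pmf of the total progeny of the associated Galton--Watson process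
with unit initial population (characterized by the pgf functional equation
`G(s) = s f(G(s))` on `[0,1]`), then the Cramér rate functions satisfy
`I_G(y) = y ⬝ I_f((y-1)/y)` for all `y ≥ 1`. -/
theorem cramerRate_totalProgeny_eq
    (p q : ℕ → ℝ≥0∞) (hp : ∑' h : ℕ, p h = 1) (hq : ∑' k : ℕ, q k = 1)
    (h0 : 0 < p 0) (hmean : ∑' h : ℕ, (h : ℝ≥0∞) * p h ≤ 1)
    (hfe : ∀ s : ℝ≥0∞, s ≤ 1 → pgf q s = s * pgf p (pgf q s)) :
    ∀ y : ℝ, 1 ≤ y →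
      cramerRate q y = (y : EReal) * cramerRate p ((y - 1) / y) := by
  obtain ⟨hq0, hrec⟩ := GWaux.qrec p q hp hq hfe
  have hfe' : ∀ s : ℝ≥0∞, pgf q s = s * pgf p (pgf q s) := GWaux.fe_all p q hq0 hrec
  have hmin : ∀ s u : ℝ≥0∞, s * pgf p u ≤ u → pgf q s ≤ u := fun s u =>
    GWaux.pgf_le_of_fixed p q hq0 hrec s u
  have hppos : ∀ t : ℝ≥0∞, 0 < pgf p t := by
    intro t
    refine lt_of_lt_of_le h0 ?_
    have := ENNReal.le_tsum (f := fun h : ℕ => t ^ h * p h) 0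
    simpa [pgf] using this
  obtain ⟨k0, hk0⟩ : ∃ k, q k ≠ 0 := by
    by_contra hall
    push_neg at hall
    simp [hall] at hq
  have hqpos : ∀ s : ℝ≥0∞, s ≠ 0 → pgf q s ≠ 0 := by
    intro s hs
    refine (lt_of_lt_of_le ?_ (ENNReal.le_tsum k0)).ne'
    exact ENNReal.mul_pos (pow_ne_zero k0 hs) hk0
  intro y hy
  have hy0 : (0:ℝ) < y := lt_of_lt_of_le one_pos hy
  set x : ℝ := (y - 1)/y with hxdef
  have hyx : y * x = y - 1 := by rw [hxdef]; field_simp [hy0.ne']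
  apply le_antisymm
  · -- cramerRate q y ≤ y * cramerRate p x
    unfold cramerRate
    refine iSup_le fun β => ?_
    set s : ℝ≥0∞ := ENNReal.ofReal (Real.exp β) with hsdef
    have hs0 : s ≠ 0 := (ENNReal.ofReal_pos.2 (Real.exp_pos β)).ne'
    have hstop : s ≠ ⊤ := ENNReal.ofReal_ne_top
    have hsr : s.toReal = Real.exp β := ENNReal.toReal_ofReal (Real.exp_pos β).le
    by_cases htop : pgf q s = ⊤
    · rw [htop, ENNReal.log_top, EReal.sub_top]
      exact bot_le
    · have ht0 : pgf q s ≠ 0 := hqpos s hs0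
      set t := pgf q s with htdef
      have hfet : t = s * pgf p t := hfe' s
      have hft_top : pgf p t ≠ ⊤ := by
        intro hC
        rw [hC, ENNReal.mul_top hs0] at hfet
        exact htop hfet
      have hft0 : pgf p t ≠ 0 := (hppos t).ne'
      have htr : 0 < t.toReal := ENNReal.toReal_pos ht0 htop
      set α : ℝ := Real.log t.toReal with hα
      have htα : ENNReal.ofReal (Real.exp α) = t := by
        rw [hα, Real.exp_log htr, ENNReal.ofReal_toReal htop]
      have hmulr := congrArg ENNReal.toReal hfet
      rw [ENNReal.toReal_mul] at hmulr
      have hL : Real.log (pgf p t).toReal = α - β := by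
        have hsr0 : s.toReal ≠ 0 := by rw [hsr]; positivity
        have hfr0 : (pgf p t).toReal ≠ 0 := ENNReal.toReal_ne_zero.2 ⟨hft0, hft_top⟩
        have h2 : α = Real.log (s.toReal * (pgf p t).toReal) := by
          rw [← hmulr]
        rw [Real.log_mul hsr0 hfr0, hsr, Real.log_exp] at h2
        linarith
      have hterm : (((β * y : ℝ)) : EReal) - ENNReal.log t
          = (y : EReal) * ((((α * x : ℝ)) : EReal)
              - ENNReal.log (pgf p (ENNReal.ofReal (Real.exp α)))) := by
        rw [htα, ENNReal.log_pos_real hft0 hft_top, ENNReal.log_pos_real ht0 htop, hL,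
          ← EReal.coe_sub, ← EReal.coe_sub, ← EReal.coe_mul]
        norm_cast
        have hyne : y ≠ 0 := hy0.ne'
        rw [hxdef]
        field_simp
        ring
      rw [hterm]
      exact mul_le_mul_of_nonneg_left
        (le_iSup (fun α' : ℝ => (((α' * x : ℝ)):EReal)
          - ENNReal.log (pgf p (ENNReal.ofReal (Real.exp α')))) α)
        (by exact_mod_cast hy0.le)
  · -- y * cramerRate p x ≤ cramerRate q y
    unfold cramerRate
    rw [GWaux.coe_mul_iSup y hy0]
    refine iSup_le fun α => ?_
    set t : ℝ≥0∞ := ENNReal.ofReal (Real.exp α) with htdef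
    have ht0 : t ≠ 0 := (ENNReal.ofReal_pos.2 (Real.exp_pos α)).ne'
    have httop : t ≠ ⊤ := ENNReal.ofReal_ne_top
    have htr : t.toReal = Real.exp α := ENNReal.toReal_ofReal (Real.exp_pos α).le
    by_cases hftop : pgf p t = ⊤
    · rw [hftop, ENNReal.log_top, EReal.sub_top,
        EReal.mul_bot_of_pos (by exact_mod_cast hy0 : (0:EReal) < (y:EReal))]
      exact bot_le
    · have hft0 : pgf p t ≠ 0 := (hppos t).ne'
      set s : ℝ≥0∞ := t / pgf p t with hsdef
      have hs0 : s ≠ 0 := (ENNReal.div_pos ht0 hftop).ne'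
      have hstop : s ≠ ⊤ := (ENNReal.div_lt_top httop hft0).ne
      have hGle : pgf q s ≤ t := hmin s t (le_of_eq (ENNReal.div_mul_cancel hft0 hftop))
      set β : ℝ := Real.log s.toReal with hβ
      have hsβ : ENNReal.ofReal (Real.exp β) = s := by
        rw [hβ, Real.exp_log (ENNReal.toReal_pos hs0 hstop), ENNReal.ofReal_toReal hstop]
      have hβval : β = α - Real.log (pgf p t).toReal := by
        rw [hβ, hsdef, ENNReal.toReal_div, Real.log_div (by rw [htr]; positivity)
          (ENNReal.toReal_ne_zero.2 ⟨hft0, hftop⟩), htr, Real.log_exp]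
      refine le_iSup_of_le β ?_
      rw [hsβ]
      calc (y:EReal) * ((((α * x :ℝ)):EReal) - ENNReal.log (pgf p t))
          = (((β * y :ℝ)) : EReal) - ((α : ℝ):EReal) := by
            rw [ENNReal.log_pos_real hft0 hftop, ← EReal.coe_sub, ← EReal.coe_mul,
              ← EReal.coe_sub]
            norm_cast
            rw [hβval]
            have hyne : y ≠ 0 := hy0.ne'
            rw [hxdef]
            field_simp
            ring
        _ ≤ (((β * y:ℝ)):EReal) - ENNReal.log (pgf q s) := by
            refine EReal.sub_le_sub le_rfl ?_
            calc ENNReal.log (pgf q s) ≤ ENNReal.log t := ENNReal.log_monotone hGle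
              _ = ((α : ℝ):EReal) := by
                  rw [ENNReal.log_pos_real ht0 httop, htr, Real.log_exp]
end

section
/- With the notation of the previous statement (f offspring pgf with p_0 > 0, μ_f ≤ 1, G the total progeny pgf satisfying G(s) = s f(G(s)), I_f and I_G the Legendre transforms of log f(e^·) and log G(e^·)): for all x ∈ [0,1), I_f(x) = (1 − x) · I_G(1/(1 − x)). -/
open scoped ENNReal
open Real

namespace GWAux

lemma tsum_pow (g : ℕ → ℝ≥0∞) : ∀ h : ℕ, (∑' k, g k) ^ h = ∑' v : Fin h → ℕ, ∏ i, g (v i)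
  | 0 => by
    rw [pow_zero]
    rw [tsum_eq_single (fun i => i.elim0) (fun b hb => absurd (Subsingleton.elim b _) hb)]
    simp
  | (h + 1) => by
    rw [pow_succ', tsum_pow g h, ← ENNReal.tsum_mul_right]
    have : ∀ k : ℕ, g k * ∑' v : Fin h → ℕ, ∏ i, g (v i)
        = ∑' v : Fin h → ℕ, g k * ∏ i, g (v i) := fun k => ENNReal.tsum_mul_left.symm
    simp_rw [this]
    calc ∑' (k : ℕ) (v : Fin h → ℕ), g k * ∏ i, g (v i)
        = ∑' x : ℕ × (Fin h → ℕ), g x.1 * ∏ i, g (x.2 i) :=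
          (ENNReal.tsum_prod' (f := fun x : ℕ × (Fin h → ℕ) => g x.1 * ∏ i, g (x.2 i))).symm
      _ = ∑' v : Fin (h+1) → ℕ, ∏ i, g (v i) := ?_
    rw [← (Fin.consEquiv (fun _ : Fin (h+1) => ℕ)).tsum_eq (fun v => ∏ i, g (v i))]
    refine tsum_congr fun x => ?_
    symm
    simp [Fin.prod_univ_succ]

lemma tsum_fiber {X : Type} (w : X → ℕ) (F : X → ℝ≥0∞) :
    ∑' k : ℕ, ∑' x : {x : X // w x = k}, F x.1 = ∑' x : X, F x := by
  rw [← ENNReal.tsum_sigma (fun k (x : {x : X // w x = k}) => F x.1)]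
  exact (Equiv.sigmaFiberEquiv w).tsum_eq F

noncomputable def coefC (p q : ℕ → ℝ≥0∞) (k : ℕ) : ℝ≥0∞ :=
  ∑' x : {x : Σ h : ℕ, Fin h → ℕ // (∑ i, x.2 i) = k}, p x.1.1 * ∏ i, q (x.1.2 i)

lemma keyGen (p q : ℕ → ℝ≥0∞) (φ : ℕ → ℝ≥0∞) :
    ∑' h : ℕ, (∑' v : Fin h → ℕ, φ (∑ i, v i) * ∏ i, q (v i)) * p h
      = ∑' k : ℕ, φ k * coefC p q k := by
  calc ∑' h : ℕ, (∑' v : Fin h → ℕ, φ (∑ i, v i) * ∏ i, q (v i)) * p h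
      = ∑' (h : ℕ) (v : Fin h → ℕ), φ (∑ i, v i) * (p h * ∏ i, q (v i)) := by
        refine tsum_congr fun h => ?_
        rw [← ENNReal.tsum_mul_right]
        refine tsum_congr fun v => ?_
        ring
    _ = ∑' x : Σ h : ℕ, Fin h → ℕ, φ (∑ i, x.2 i) * (p x.1 * ∏ i, q (x.2 i)) :=
        (ENNReal.tsum_sigma (fun h (v : Fin h → ℕ) => φ (∑ i, v i) * (p h * ∏ i, q (v i)))).symm
    _ = ∑' (k : ℕ) (x : {x : Σ h : ℕ, Fin h → ℕ // (∑ i, x.2 i) = k}),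
          φ (∑ i, x.1.2 i) * (p x.1.1 * ∏ i, q (x.1.2 i)) :=
        (tsum_fiber (fun x : Σ h : ℕ, Fin h → ℕ => ∑ i, x.2 i)
          (fun x => φ (∑ i, x.2 i) * (p x.1 * ∏ i, q (x.2 i)))).symm
    _ = ∑' k : ℕ, φ k * coefC p q k := by
        refine tsum_congr fun k => ?_
        rw [coefC, ← ENNReal.tsum_mul_left]
        exact tsum_congr fun x => by rw [x.2]

lemma comp_eq (p q : ℕ → ℝ≥0∞) (s : ℝ≥0∞) :
    pgf p (pgf q s) = ∑' k : ℕ, s ^ k * coefC p q k := by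
  rw [← keyGen p q (fun k => s ^ k)]
  refine tsum_congr fun h => ?_
  congr 1
  rw [show pgf q s = ∑' k, (fun k => s ^ k * q k) k from rfl, tsum_pow]
  refine tsum_congr fun v => ?_
  rw [Finset.prod_mul_distrib, Finset.prod_pow_eq_pow_sum]

lemma shift_sum (a : ℕ → ℝ≥0∞) (s : ℝ≥0∞) :
    ∑' k : ℕ, s ^ k * a k = a 0 + s * ∑' k : ℕ, s ^ k * a (k + 1) := by
  rw [tsum_eq_zero_add' ENNReal.summable, pow_zero, one_mul, ← ENNReal.tsum_mul_left]
  congr 1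
  refine tsum_congr fun k => ?_
  rw [pow_succ', mul_assoc]

lemma tail_le (b : ℕ → ℝ≥0∞) : ∑' k : ℕ, b (k + 1) ≤ ∑' k : ℕ, b k := by
  have := shift_sum b 1
  simp only [one_pow, one_mul] at this
  rw [this]
  exact le_add_self

lemma head_le (a b : ℕ → ℝ≥0∞) (hb : (∑' k : ℕ, b k) ≠ ⊤)
    (h : ∀ s : ℝ≥0∞, 0 < s → s ≤ 1 → ∑' k : ℕ, s ^ k * a k = ∑' k : ℕ, s ^ k * b k) :
    a 0 ≤ b 0 := by
  refine ENNReal.le_of_forall_pos_le_add fun ε hε _ => ?_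
  set B := ∑' k : ℕ, b k with hB
  have key : ∀ s : ℝ≥0∞, 0 < s → s ≤ 1 → a 0 ≤ b 0 + s * B := by
    intro s hs hs1
    have h1 : a 0 ≤ ∑' k : ℕ, s ^ k * a k := by
      have := ENNReal.le_tsum (f := fun k : ℕ => s ^ k * a k) 0
      simpa using this
    have h2 : (∑' k : ℕ, s ^ k * b (k + 1)) ≤ B := by
      refine le_trans (ENNReal.tsum_le_tsum fun k => ?_) (tail_le b)
      calc s ^ k * b (k + 1) ≤ 1 * b (k + 1) := by
            exact mul_le_mul' (pow_le_one' hs1 k) le_rfl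
        _ = b (k + 1) := one_mul _
    calc a 0 ≤ ∑' k : ℕ, s ^ k * a k := h1
      _ = ∑' k : ℕ, s ^ k * b k := h s hs hs1
      _ = b 0 + s * ∑' k : ℕ, s ^ k * b (k + 1) := shift_sum b s
      _ ≤ b 0 + s * B := by gcongr
  rcases eq_or_ne B 0 with hB0 | hB0
  · have := key 1 one_pos le_rfl
    rw [hB0, mul_zero, add_zero] at this
    exact this.trans le_self_add
  · have hs : (0 : ℝ≥0∞) < min 1 ((ε : ℝ≥0∞) / B) := by
      refine lt_min one_pos (ENNReal.div_pos ?_ hb)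
      exact_mod_cast hε.ne'
    have := key _ hs (min_le_left _ _)
    refine this.trans ?_
    gcongr
    calc min 1 ((ε : ℝ≥0∞) / B) * B ≤ ((ε : ℝ≥0∞) / B) * B :=
          mul_le_mul' (min_le_right _ _) le_rfl
      _ = (ε : ℝ≥0∞) := by rw [ENNReal.div_mul_cancel hB0 hb]

lemma uniq : ∀ (n : ℕ) (a b : ℕ → ℝ≥0∞), (∑' k : ℕ, a k) ≠ ⊤ → (∑' k : ℕ, b k) ≠ ⊤ →
    (∀ s : ℝ≥0∞, 0 < s → s ≤ 1 → ∑' k : ℕ, s ^ k * a k = ∑' k : ℕ, s ^ k * b k) →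
    a n = b n := by
  intro n
  induction n with
  | zero =>
    intro a b ha hb h
    exact le_antisymm (head_le a b hb h) (head_le b a ha fun s hs hs1 => (h s hs hs1).symm)
  | succ n ih =>
    intro a b ha hb h
    have h0 : a 0 = b 0 :=
      le_antisymm (head_le a b hb h) (head_le b a ha fun s hs hs1 => (h s hs hs1).symm)
    have ha0 : a 0 ≠ ⊤ := by
      refine ne_top_of_le_ne_top ha ?_
      have := ENNReal.le_tsum (f := a) 0
      simpa using this
    have ha' : (∑' k : ℕ, a (k + 1)) ≠ ⊤ := ne_top_of_le_ne_top ha (tail_le a)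
    have hb' : (∑' k : ℕ, b (k + 1)) ≠ ⊤ := ne_top_of_le_ne_top hb (tail_le b)
    refine ih (fun k => a (k + 1)) (fun k => b (k + 1)) ha' hb' fun s hs hs1 => ?_
    have heq := h s hs hs1
    rw [shift_sum a s, shift_sum b s, h0] at heq
    have hcancel : s * ∑' k : ℕ, s ^ k * a (k + 1) = s * ∑' k : ℕ, s ^ k * b (k + 1) := by
      rw [h0] at ha0
      exact (ENNReal.add_right_inj ha0).mp heq
    exact (ENNReal.mul_right_inj hs.ne' (hs1.trans_lt ENNReal.one_lt_top).ne).mp hcancel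

lemma pgf_mono (p : ℕ → ℝ≥0∞) {x y : ℝ≥0∞} (h : x ≤ y) : pgf p x ≤ pgf p y :=
  ENNReal.tsum_le_tsum fun k => mul_le_mul' (pow_le_pow_left' h k) le_rfl

lemma pgf_one (p : ℕ → ℝ≥0∞) : pgf p 1 = ∑' h : ℕ, p h := by
  simp [pgf]

lemma le_pgf (p : ℕ → ℝ≥0∞) (x : ℝ≥0∞) : p 0 ≤ pgf p x := by
  have := ENNReal.le_tsum (f := fun h : ℕ => x ^ h * p h) 0
  simpa [pgf] using this

lemma pgf_pos {q : ℕ → ℝ≥0∞} (hq : ∑' k : ℕ, q k = 1) {x : ℝ≥0∞} (hx : 0 < x) :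
    0 < pgf q x := by
  by_contra hcon
  push_neg at hcon
  have h0 : pgf q x = 0 := le_antisymm hcon zero_le
  have : ∀ k : ℕ, x ^ k * q k = 0 := by
    intro k
    have := (ENNReal.le_tsum (f := fun h : ℕ => x ^ h * q h) k).trans h0.le
    exact le_antisymm this zero_le
  have hq0 : ∀ k : ℕ, q k = 0 := by
    intro k
    have hk := this k
    rcases mul_eq_zero.mp hk with h | h
    · exact absurd h (pow_ne_zero k hx.ne')
    · exact h
  rw [tsum_congr hq0] at hq
  simp at hq

section coef

variable {p q : ℕ → ℝ≥0∞}

lemma sum_coef (hp : ∑' h : ℕ, p h = 1) (hq : ∑' k : ℕ, q k = 1)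
    (hfe : ∀ s : ℝ≥0∞, s ≤ 1 → pgf q s = s * pgf p (pgf q s)) :
    ∑' k : ℕ, coefC p q k = 1 := by
  have h1 : pgf q 1 = 1 := by rw [pgf_one, hq]
  have := comp_eq p q 1
  rw [h1] at this
  simp only [one_pow, one_mul] at this
  rw [← this, pgf_one, hp]

lemma coef_eq (hp : ∑' h : ℕ, p h = 1) (hq : ∑' k : ℕ, q k = 1)
    (hfe : ∀ s : ℝ≥0∞, s ≤ 1 → pgf q s = s * pgf p (pgf q s)) :
    q 0 = 0 ∧ ∀ k : ℕ, q (k + 1) = coefC p q k := by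
  set d : ℕ → ℝ≥0∞ := fun k => Nat.casesOn k 0 (fun j => coefC p q j) with hd
  have hsd : ∑' k : ℕ, d k = 1 := by
    have := shift_sum d 1
    simp only [one_pow, one_mul] at this
    rw [this]
    show (0 : ℝ≥0∞) + ∑' k : ℕ, coefC p q k = 1
    rw [zero_add, sum_coef hp hq hfe]
  have huniq : ∀ n : ℕ, q n = d n := by
    intro n
    refine uniq n q d (by rw [hq]; exact ENNReal.one_ne_top)
      (by rw [hsd]; exact ENNReal.one_ne_top) fun s hs hs1 => ?_
    have hL : ∑' k : ℕ, s ^ k * q k = s * ∑' k : ℕ, s ^ k * coefC p q k := by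
      rw [show (∑' k : ℕ, s ^ k * q k) = pgf q s from rfl, hfe s hs1, comp_eq]
    have hR : ∑' k : ℕ, s ^ k * d k = s * ∑' k : ℕ, s ^ k * coefC p q k := by
      rw [shift_sum d s]
      show (0 : ℝ≥0∞) + s * ∑' k : ℕ, s ^ k * coefC p q k = _
      rw [zero_add]
    rw [hL, hR]
  exact ⟨huniq 0, fun k => huniq (k + 1)⟩

lemma fe_all (hq0 : q 0 = 0) (hqc : ∀ k : ℕ, q (k + 1) = coefC p q k) (s : ℝ≥0∞) :
    pgf q s = s * pgf p (pgf q s) := by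
  rw [comp_eq]
  show (∑' k : ℕ, s ^ k * q k) = _
  rw [shift_sum q s, hq0, zero_add]
  congr 1
  exact tsum_congr fun k => by rw [hqc k]

lemma pgf_progeny_le (hq0 : q 0 = 0) (hqc : ∀ k : ℕ, q (k + 1) = coefC p q k)
    {s t : ℝ≥0∞} (hst : s * pgf p t ≤ t) : pgf q s ≤ t := by
  have hps : pgf q s = ⨆ n : ℕ, ∑ k ∈ Finset.range n, s ^ k * q k := ENNReal.tsum_eq_iSup_nat
  rw [hps]
  refine iSup_le fun n => ?_
  induction n with
  | zero => simp
  | succ n ih =>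
    rw [Finset.sum_range_succ']
    simp only [pow_zero, one_mul, hq0, add_zero]
    have step1 : (∑ i ∈ Finset.range n, s ^ (i + 1) * q (i + 1))
        = s * ∑ i ∈ Finset.range n, s ^ i * coefC p q i := by
      rw [Finset.mul_sum]
      refine Finset.sum_congr rfl fun i _ => ?_
      rw [hqc i, pow_succ', mul_assoc]
    have step2 : (∑ i ∈ Finset.range n, s ^ i * coefC p q i)
        ≤ pgf p (∑ k ∈ Finset.range n, s ^ k * q k) := by
      have hL : (∑ i ∈ Finset.range n, s ^ i * coefC p q i)
          = ∑' k : ℕ, (if k < n then s ^ k else 0) * coefC p q k := by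
        rw [tsum_eq_sum (s := Finset.range n)
          (fun b hb => by rw [if_neg (Finset.mem_range.not.mp hb), zero_mul])]
        exact (Finset.sum_congr rfl fun i hi => by
          rw [if_pos (Finset.mem_range.mp hi)]).symm
      have hQ : (∑ k ∈ Finset.range n, s ^ k * q k)
          = ∑' k : ℕ, (if k < n then s ^ k else 0) * q k := by
        rw [tsum_eq_sum (s := Finset.range n)
          (fun b hb => by rw [if_neg (Finset.mem_range.not.mp hb), zero_mul])]
        exact (Finset.sum_congr rfl fun i hi => by
          rw [if_pos (Finset.mem_range.mp hi)]).symm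
      rw [hL, ← keyGen p q (fun k => if k < n then s ^ k else 0), hQ, pgf]
      refine ENNReal.tsum_le_tsum fun h => mul_le_mul' ?_ le_rfl
      rw [tsum_pow (fun k => (if k < n then s ^ k else 0) * q k) h]
      refine ENNReal.tsum_le_tsum fun v => ?_
      by_cases hv : (∑ i, v i) < n
      · have hvi : ∀ i, v i < n := fun i => lt_of_le_of_lt
          (Finset.single_le_sum (f := fun i => v i) (fun _ _ => Nat.zero_le _)
            (Finset.mem_univ i)) hv
        simp only [if_pos hv, if_pos (hvi _)]
        rw [Finset.prod_mul_distrib, Finset.prod_pow_eq_pow_sum]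
      · simp [if_neg hv]
    calc (∑ i ∈ Finset.range n, s ^ (i + 1) * q (i + 1))
        = s * ∑ i ∈ Finset.range n, s ^ i * coefC p q i := step1
      _ ≤ s * pgf p (∑ k ∈ Finset.range n, s ^ k * q k) := mul_le_mul' le_rfl step2
      _ ≤ s * pgf p t := mul_le_mul' le_rfl (pgf_mono p ih)
      _ ≤ t := hst

end coef

lemma ereal_mul_iSup {c : ℝ} (hc : 0 < c) (f : ℝ → EReal) :
    (c : EReal) * (⨆ i, f i) = ⨆ i, (c : EReal) * f i := by
  have hcc : (0 : EReal) ≤ (c : EReal) := by exact_mod_cast hc.le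
  have hci : (0 : EReal) ≤ ((c⁻¹ : ℝ) : EReal) := by
    exact_mod_cast (inv_nonneg.mpr hc.le)
  refine le_antisymm ?_ (iSup_le fun i => mul_le_mul_of_nonneg_left (le_iSup f i) hcc)
  have h1 : (⨆ i, f i) ≤ ((c⁻¹ : ℝ) : EReal) * ⨆ i, (c : EReal) * f i := by
    refine iSup_le fun i => ?_
    have hfi : f i = ((c⁻¹ : ℝ) : EReal) * ((c : EReal) * f i) := by
      rw [← mul_assoc, ← EReal.coe_mul, inv_mul_cancel₀ hc.ne', EReal.coe_one, one_mul]
    rw [hfi]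
    exact mul_le_mul_of_nonneg_left (le_iSup (fun i => (c : EReal) * f i) i) hci
  calc (c : EReal) * (⨆ i, f i)
      ≤ (c : EReal) * (((c⁻¹ : ℝ) : EReal) * ⨆ i, (c : EReal) * f i) :=
        mul_le_mul_of_nonneg_left h1 hcc
    _ = ⨆ i, (c : EReal) * f i := by
        rw [← mul_assoc, ← EReal.coe_mul, mul_inv_cancel₀ hc.ne', EReal.coe_one, one_mul]

end GWAux

/-- If `p` is an offspring pmf with `p 0 > 0` and mean `≤ 1`, and `q` is the pmf of the
total progeny of the associated Galton--Watson process with unit initial population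
(characterized by the pgf functional equation `G(s) = s f(G(s))` on `[0,1]`), then
`I_f(x) = (1 - x) ⬝ I_G(1/(1-x))` for all `x ∈ [0,1)`. -/
theorem cramerRate_offspring_eq
    (p q : ℕ → ℝ≥0∞) (hp : ∑' h : ℕ, p h = 1) (hq : ∑' k : ℕ, q k = 1)
    (h0 : 0 < p 0) (hmean : ∑' h : ℕ, (h : ℝ≥0∞) * p h ≤ 1)
    (hfe : ∀ s : ℝ≥0∞, s ≤ 1 → pgf q s = s * pgf p (pgf q s)) :
    ∀ x : ℝ, 0 ≤ x → x < 1 →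
      cramerRate p x = ((1 - x : ℝ) : EReal) * cramerRate q (1 / (1 - x)) := by
  intro x hx0 hx1
  have hc : (0 : ℝ) < 1 - x := by linarith
  have hcc : (0 : EReal) ≤ ((1 - x : ℝ) : EReal) := by exact_mod_cast hc.le
  obtain ⟨hq0, hqc⟩ := GWAux.coef_eq hp hq hfe
  set y : ℝ := 1 / (1 - x) with hy
  have hyc : (1 - x) * y = 1 := by
    rw [hy]; field_simp
  rw [cramerRate, cramerRate, GWAux.ereal_mul_iSup hc]
  apply le_antisymm
  · refine iSup_le fun α => ?_
    set fv := pgf p (ENNReal.ofReal (Real.exp α)) with hfv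
    have hfv0 : fv ≠ 0 := (h0.trans_le (GWAux.le_pgf p (ENNReal.ofReal (Real.exp α)))).ne' 
    rcases eq_or_ne fv ⊤ with htop | htop
    · rw [htop, ENNReal.log_top, EReal.sub_top]
      exact bot_le
    · set Lf : ℝ := Real.log fv.toReal with hLf
      have hlogfv : ENNReal.log fv = (Lf : EReal) := ENNReal.log_pos_real hfv0 htop
      set β : ℝ := α - Lf with hβ
      have hfvR : 0 < fv.toReal := ENNReal.toReal_pos hfv0 htop
      have hkey : ENNReal.ofReal (Real.exp β) * fv = ENNReal.ofReal (Real.exp α) := by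
        conv_lhs => rw [← ENNReal.ofReal_toReal htop]
        rw [← ENNReal.ofReal_mul (Real.exp_pos β).le]
        congr 1
        rw [hβ, Real.exp_sub, hLf, Real.exp_log hfvR]
        field_simp
      have hmin : pgf q (ENNReal.ofReal (Real.exp β)) ≤ ENNReal.ofReal (Real.exp α) := by
        refine GWAux.pgf_progeny_le hq0 hqc ?_
        rw [← hfv, hkey]
      have hlogle : ENNReal.log (pgf q (ENNReal.ofReal (Real.exp β))) ≤ (α : EReal) := by
        calc ENNReal.log (pgf q (ENNReal.ofReal (Real.exp β)))
            ≤ ENNReal.log (ENNReal.ofReal (Real.exp α)) := ENNReal.log_monotone hmin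
          _ = (α : EReal) := by rw [ENNReal.log_ofReal_of_pos (Real.exp_pos α), Real.log_exp]
      refine le_trans ?_ (le_iSup (fun β => ((1 - x : ℝ) : EReal)
        * (((β * y : ℝ) : EReal) - ENNReal.log (pgf q (ENNReal.ofReal (Real.exp β))))) β)
      rw [hlogfv]
      calc ((α * x : ℝ) : EReal) - (Lf : EReal)
          = ((α * x - Lf : ℝ) : EReal) := by norm_cast
        _ = (((1 - x) * (β * y - α) : ℝ) : EReal) := by
            congr 1
            have : β * ((1 - x) * y) = β := by rw [hyc, mul_one]
            nlinarith [this]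
        _ = ((1 - x : ℝ) : EReal) * ((β * y - α : ℝ) : EReal) := by norm_cast
        _ = ((1 - x : ℝ) : EReal) * (((β * y : ℝ) : EReal) - (α : EReal)) := by
            norm_cast
        _ ≤ ((1 - x : ℝ) : EReal)
              * (((β * y : ℝ) : EReal) - ENNReal.log (pgf q (ENNReal.ofReal (Real.exp β)))) :=
            mul_le_mul_of_nonneg_left (EReal.sub_le_sub le_rfl hlogle) hcc
  · refine iSup_le fun β => ?_
    set Gv := pgf q (ENNReal.ofReal (Real.exp β)) with hGv
    rcases eq_or_ne Gv ⊤ with htop | htop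
    · rw [htop, ENNReal.log_top, EReal.sub_top, EReal.coe_mul_bot_of_pos hc]
      exact bot_le
    · have hGv0 : Gv ≠ 0 :=
        (GWAux.pgf_pos hq (ENNReal.ofReal_pos.mpr (Real.exp_pos β))).ne'
      set α : ℝ := Real.log Gv.toReal with hα
      have hlogGv : ENNReal.log Gv = (α : EReal) := ENNReal.log_pos_real hGv0 htop
      have hEα : ENNReal.ofReal (Real.exp α) = Gv := by
        rw [hα, Real.exp_log (ENNReal.toReal_pos hGv0 htop), ENNReal.ofReal_toReal htop]
      have hfe' : Gv = ENNReal.ofReal (Real.exp β) * pgf p Gv := GWAux.fe_all hq0 hqc _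
      set fv2 := pgf p Gv with hfv2
      have hfv2_0 : fv2 ≠ 0 := (h0.trans_le (GWAux.le_pgf p Gv)).ne' 
      have hE0 : ENNReal.ofReal (Real.exp β) ≠ 0 :=
        (ENNReal.ofReal_pos.mpr (Real.exp_pos β)).ne'
      have hfv2top : fv2 ≠ ⊤ := by
        intro hcon
        rw [hcon, ENNReal.mul_top hE0] at hfe'
        exact htop hfe'
      set Lf2 : ℝ := Real.log fv2.toReal with hLf2
      have hlogfv2 : ENNReal.log fv2 = (Lf2 : EReal) := ENNReal.log_pos_real hfv2_0 hfv2top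
      have hαβ : α = β + Lf2 := by
        have hlog : ENNReal.log Gv = ENNReal.log (ENNReal.ofReal (Real.exp β) * fv2) := by
          rw [← hfe']
        rw [ENNReal.log_mul_add, hlogGv, hlogfv2,
          ENNReal.log_ofReal_of_pos (Real.exp_pos β), Real.log_exp] at hlog
        have : ((β + Lf2 : ℝ) : EReal) = ((α : ℝ) : EReal) := by
          rw [EReal.coe_add, hlog]
        exact_mod_cast this.symm
      refine le_trans (le_of_eq ?_) (le_iSup (fun α => ((α * x : ℝ) : EReal)
        - ENNReal.log (pgf p (ENNReal.ofReal (Real.exp α)))) α)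
      rw [hEα, hlogfv2, hlogGv]
      calc ((1 - x : ℝ) : EReal) * (((β * y : ℝ) : EReal) - (α : EReal))
          = ((1 - x : ℝ) : EReal) * ((β * y - α : ℝ) : EReal) := by norm_cast
        _ = (((1 - x) * (β * y - α) : ℝ) : EReal) := by norm_cast
        _ = ((α * x - Lf2 : ℝ) : EReal) := by
            congr 1
            have : β * ((1 - x) * y) = β := by rw [hyc, mul_one]
            nlinarith [this, hαβ]
        _ = ((α * x : ℝ) : EReal) - (Lf2 : EReal) := by norm_cast
end
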